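/- Let m = (0, σ) ∈ B_n with σ ∈ S_n, and let ℓ = (v, π) ∈ B_n commute with m. The group generated by π permutes the orbits of σ on Fin n; for each orbit O of this action on the set of σ-orbits, all σ-orbits in O have the same cardinality e_O, and we set d_O = #{C ∈ O : v takes the value 1 on C} (v is constant on each σ-orbit). Then φ(m, ℓ) = ε̂^N with N = Σ_O (e_O − 1)·d_O, the sum being over all orbits O of ⟨π⟩ on the set of σ-orbits. -/

import Mathlib

open Finset Equiv
open scoped commutatorElement

/-- `Qf n a b = ∑_{i < j} a i * b j`. -/
def Qf (n : ℕ) (a b : Fin n → ZMod 2) : ZMod 2 :=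
  ∑ p ∈ Finset.univ.filter (fun p : Fin n × Fin n => p.1 < p.2), a p.1 * b p.2

/-- The underlying set of the group `H n`: pairs `(a, b)` with
`a : Fin n → ZMod 2` and `b : ZMod 2`. -/
@[ext] structure H (n : ℕ) where
  a : Fin n → ZMod 2
  b : ZMod 2

namespace H

variable {n : ℕ}

instance : Mul (H n) := ⟨fun x y => ⟨x.a + y.a, x.b + y.b + Qf n x.a y.a⟩⟩
instance : One (H n) := ⟨⟨0, 0⟩⟩
instance : Inv (H n) := ⟨fun x => ⟨x.a, x.b + Qf n x.a x.a⟩⟩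

@[simp] lemma mul_a (x y : H n) : (x * y).a = x.a + y.a := rfl
@[simp] lemma mul_b (x y : H n) : (x * y).b = x.b + y.b + Qf n x.a y.a := rfl
@[simp] lemma one_a : (1 : H n).a = 0 := rfl
@[simp] lemma one_b : (1 : H n).b = 0 := rfl
@[simp] lemma inv_a (x : H n) : (x⁻¹).a = x.a := rfl
@[simp] lemma inv_b (x : H n) : (x⁻¹).b = x.b + Qf n x.a x.a := rfl

lemma Qf_add_left (a a' b : Fin n → ZMod 2) :
    Qf n (a + a') b = Qf n a b + Qf n a' b := by
  simp [Qf, add_mul, Finset.sum_add_distrib]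

lemma Qf_add_right (a b b' : Fin n → ZMod 2) :
    Qf n a (b + b') = Qf n a b + Qf n a b' := by
  simp [Qf, mul_add, Finset.sum_add_distrib]

@[simp] lemma Qf_zero_left (b : Fin n → ZMod 2) : Qf n 0 b = 0 := by simp [Qf]
@[simp] lemma Qf_zero_right (a : Fin n → ZMod 2) : Qf n a 0 = 0 := by simp [Qf]

instance : Group (H n) where
  mul_assoc x y z := by
    ext i
    · simp [add_assoc]
    · simp only [mul_b, mul_a, Qf_add_left, Qf_add_right]
      ring
  one_mul x := by ext i <;> simp
  mul_one x := by ext i <;> simp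
  inv_mul_cancel x := by
    ext i
    · show x.a i + x.a i = 0
      generalize x.a i = u; revert u; decide
    · show x.b + Qf n x.a x.a + x.b + Qf n x.a x.a = 0
      generalize x.b = u; generalize Qf n x.a x.a = q
      revert u q; decide

end H

/-- The generator `x_i = (e_i, 0)` of `H n`. -/
def xgen (n : ℕ) (i : Fin n) : H n := ⟨Pi.single i 1, 0⟩

/-- The central element `ε = (0, 1)` of `H n`. -/
def eps (n : ℕ) : H n := ⟨0, 1⟩

/-- `Rf n σ a = ∑_{i < j, σ i > σ j} a i * a j`. -/
def Rf (n : ℕ) (σ : Equiv.Perm (Fin n)) (a : Fin n → ZMod 2) : ZMod 2 :=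
  ∑ p ∈ Finset.univ.filter
      (fun p : Fin n × Fin n => p.1 < p.2 ∧ σ p.2 < σ p.1), a p.1 * a p.2

/-- The action of `σ ∈ Sₙ` on `H n`:
`σ · (a, b) = (a ∘ σ⁻¹, b + ∑_{i<j, σ i > σ j} a i * a j)`. -/
def actH (n : ℕ) (σ : Equiv.Perm (Fin n)) (g : H n) : H n :=
  ⟨g.a ∘ σ.symm, g.b + Rf n σ g.a⟩

section Lemmas

open Finset Equiv

variable {n : ℕ}

private lemma two_cancel : ∀ x : ZMod 2, x + x = 0 := by decide

/-- Reindexing a pair-sum by a permutation acting diagonally. -/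
private lemma sum_pair_perm (τ : Equiv.Perm (Fin n)) (c : Fin n × Fin n → Prop)
    [DecidablePred c] (f : Fin n → Fin n → ZMod 2) :
    ∑ p ∈ Finset.univ.filter (fun p : Fin n × Fin n => c (τ p.1, τ p.2)), f (τ p.1) (τ p.2)
      = ∑ p ∈ Finset.univ.filter c, f p.1 p.2 := by
  apply Finset.sum_equiv (Equiv.prodCongr τ τ) <;> simp

/-- Reindexing a pair-sum by the swap. -/
private lemma sum_pair_swap (c : Fin n × Fin n → Prop)
    [DecidablePred c] (f : Fin n → Fin n → ZMod 2) :
    ∑ p ∈ Finset.univ.filter c, f p.1 p.2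
      = ∑ p ∈ Finset.univ.filter (fun p : Fin n × Fin n => c (p.2, p.1)), f p.2 p.1 := by
  apply Finset.sum_equiv (Equiv.prodComm (Fin n) (Fin n)) <;> simp

end Lemmas

section Lemmas2

open Finset Equiv

variable {n : ℕ}

private lemma flip_lt {x y : Fin n} (hne : x ≠ y) : ¬ x < y ↔ y < x :=
  ⟨fun h => lt_of_le_of_ne (not_lt.mp h) hne.symm, fun h h' => absurd h' (asymm h)⟩

private lemma Rf_add (σ : Equiv.Perm (Fin n)) (a b : Fin n → ZMod 2) :
    Rf n σ (a + b) = Rf n σ a + Rf n σ b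
      + ∑ p ∈ Finset.univ.filter (fun p : Fin n × Fin n => p.1 < p.2 ∧ σ p.2 < σ p.1),
          (a p.1 * b p.2 + b p.1 * a p.2) := by
  simp only [Rf, ← Finset.sum_add_distrib]
  apply Finset.sum_congr rfl
  intro p _
  simp only [Pi.add_apply]
  ring

private lemma Qf_act (σ : Equiv.Perm (Fin n)) (a b : Fin n → ZMod 2) :
    Qf n (a ∘ σ.symm) (b ∘ σ.symm)
      = Qf n a b
        + ∑ p ∈ Finset.univ.filter (fun p : Fin n × Fin n => p.1 < p.2 ∧ σ p.2 < σ p.1),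
            (a p.1 * b p.2 + b p.1 * a p.2) := by
  classical
  have h1 : Qf n (a ∘ σ.symm) (b ∘ σ.symm)
      = ∑ p ∈ Finset.univ.filter (fun p : Fin n × Fin n => σ p.1 < σ p.2),
          a p.1 * b p.2 := by
    rw [Qf]
    apply Finset.sum_equiv (Equiv.prodCongr σ.symm σ.symm) <;> simp
  have h2 : ∑ p ∈ Finset.univ.filter (fun p : Fin n × Fin n => σ p.1 < σ p.2), a p.1 * b p.2
      = ∑ p ∈ Finset.univ.filter
            (fun p : Fin n × Fin n => σ p.1 < σ p.2 ∧ p.1 < p.2), a p.1 * b p.2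
        + ∑ p ∈ Finset.univ.filter
            (fun p : Fin n × Fin n => σ p.1 < σ p.2 ∧ p.2 < p.1), a p.1 * b p.2 := by
    rw [← Finset.sum_filter_add_sum_filter_not
      (Finset.univ.filter (fun p : Fin n × Fin n => σ p.1 < σ p.2))
      (fun p : Fin n × Fin n => p.1 < p.2)]
    congr 1
    · rw [Finset.filter_filter]
    · rw [Finset.filter_filter]
      refine Finset.sum_congr (Finset.filter_congr ?_) (fun _ _ => rfl)
      intro p _
      constructor
      · rintro ⟨h1', h2'⟩
        have hne : p.1 ≠ p.2 := fun h => absurd (h ▸ h1' : σ p.1 < σ p.1) (lt_irrefl _)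
        exact ⟨h1', (flip_lt hne).mp h2'⟩
      · rintro ⟨h1', h2'⟩
        exact ⟨h1', fun h => absurd h (asymm h2')⟩
  have h3 : ∑ p ∈ Finset.univ.filter
        (fun p : Fin n × Fin n => σ p.1 < σ p.2 ∧ p.2 < p.1), a p.1 * b p.2
      = ∑ p ∈ Finset.univ.filter
            (fun p : Fin n × Fin n => p.1 < p.2 ∧ σ p.2 < σ p.1), b p.1 * a p.2 := by
    rw [sum_pair_swap (fun p : Fin n × Fin n => σ p.1 < σ p.2 ∧ p.2 < p.1)
      (fun i j => a i * b j)]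
    refine Finset.sum_congr (Finset.filter_congr ?_) ?_
    · intro p _
      exact ⟨fun h => ⟨h.2, h.1⟩, fun h => ⟨h.2, h.1⟩⟩
    · intro p _; ring
  have h4 : Qf n a b
      = ∑ p ∈ Finset.univ.filter
            (fun p : Fin n × Fin n => σ p.1 < σ p.2 ∧ p.1 < p.2), a p.1 * b p.2
        + ∑ p ∈ Finset.univ.filter
            (fun p : Fin n × Fin n => p.1 < p.2 ∧ σ p.2 < σ p.1), a p.1 * b p.2 := by
    rw [Qf, ← Finset.sum_filter_add_sum_filter_not
      (Finset.univ.filter (fun p : Fin n × Fin n => p.1 < p.2))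
      (fun p : Fin n × Fin n => σ p.1 < σ p.2)]
    congr 1
    · rw [Finset.filter_filter]
      refine Finset.sum_congr (Finset.filter_congr ?_) (fun _ _ => rfl)
      intro p _
      exact ⟨fun h => ⟨h.2, h.1⟩, fun h => ⟨h.2, h.1⟩⟩
    · rw [Finset.filter_filter]
      refine Finset.sum_congr (Finset.filter_congr ?_) (fun _ _ => rfl)
      intro p _
      constructor
      · rintro ⟨h1', h2'⟩
        have hne : σ p.1 ≠ σ p.2 := fun h =>
          absurd h1' (by rw [σ.injective h]; exact lt_irrefl _)
        exact ⟨h1', (flip_lt hne).mp h2'⟩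
      · rintro ⟨h1', h2'⟩
        exact ⟨h1', fun h => absurd h (asymm h2')⟩
  have h5 : ∑ p ∈ Finset.univ.filter
        (fun p : Fin n × Fin n => p.1 < p.2 ∧ σ p.2 < σ p.1),
          (a p.1 * b p.2 + b p.1 * a p.2)
      = ∑ p ∈ Finset.univ.filter
            (fun p : Fin n × Fin n => p.1 < p.2 ∧ σ p.2 < σ p.1), a p.1 * b p.2
        + ∑ p ∈ Finset.univ.filter
            (fun p : Fin n × Fin n => p.1 < p.2 ∧ σ p.2 < σ p.1), b p.1 * a p.2 :=
    Finset.sum_add_distrib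
  rw [h1, h2, h3, h4, h5]
  have h6 := two_cancel (∑ p ∈ Finset.univ.filter
      (fun p : Fin n × Fin n => p.1 < p.2 ∧ σ p.2 < σ p.1), a p.1 * b p.2)
  linear_combination -h6

end Lemmas2

section Lemmas3

open Finset Equiv

variable {n : ℕ}

private lemma Rf_comp (σ τ : Equiv.Perm (Fin n)) (a : Fin n → ZMod 2) :
    Rf n (σ * τ) a = Rf n τ a + Rf n σ (a ∘ τ.symm) := by
  classical
  -- rewrite `Rf (σ * τ)`
  have hA : Rf n (σ * τ) a
      = ∑ p ∈ Finset.univ.filter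
          (fun p : Fin n × Fin n => p.1 < p.2 ∧ σ (τ p.2) < σ (τ p.1)), a p.1 * a p.2 := by
    rw [Rf]
    refine Finset.sum_congr (Finset.filter_congr ?_) (fun _ _ => rfl)
    intro p _
    simp [Equiv.Perm.mul_apply]
  -- split it according to the relative order of `τ p.1`, `τ p.2`
  have hB : ∑ p ∈ Finset.univ.filter
        (fun p : Fin n × Fin n => p.1 < p.2 ∧ σ (τ p.2) < σ (τ p.1)), a p.1 * a p.2
      = ∑ p ∈ Finset.univ.filter
            (fun p : Fin n × Fin n =>
              (p.1 < p.2 ∧ σ (τ p.2) < σ (τ p.1)) ∧ τ p.1 < τ p.2), a p.1 * a p.2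
        + ∑ p ∈ Finset.univ.filter
            (fun p : Fin n × Fin n =>
              (p.1 < p.2 ∧ σ (τ p.2) < σ (τ p.1)) ∧ τ p.2 < τ p.1), a p.1 * a p.2 := by
    rw [← Finset.sum_filter_add_sum_filter_not
      (Finset.univ.filter
        (fun p : Fin n × Fin n => p.1 < p.2 ∧ σ (τ p.2) < σ (τ p.1)))
      (fun p : Fin n × Fin n => τ p.1 < τ p.2)]
    congr 1
    · rw [Finset.filter_filter]
    · rw [Finset.filter_filter]
      refine Finset.sum_congr (Finset.filter_congr ?_) (fun _ _ => rfl)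
      intro p _
      constructor
      · rintro ⟨h1, h2⟩
        have hne : τ p.1 ≠ τ p.2 := fun h => absurd h1.1 (by
          have := τ.injective h; rw [this]; exact lt_irrefl _)
        exact ⟨h1, (flip_lt hne).mp h2⟩
      · rintro ⟨h1, h2⟩
        exact ⟨h1, fun h => absurd h (asymm h2)⟩
  -- split `Rf τ a` according to the relative order of `στ p.1`, `στ p.2`
  have hC : Rf n τ a
      = ∑ p ∈ Finset.univ.filter
            (fun p : Fin n × Fin n =>
              (p.1 < p.2 ∧ τ p.2 < τ p.1) ∧ σ (τ p.1) < σ (τ p.2)), a p.1 * a p.2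
        + ∑ p ∈ Finset.univ.filter
            (fun p : Fin n × Fin n =>
              (p.1 < p.2 ∧ σ (τ p.2) < σ (τ p.1)) ∧ τ p.2 < τ p.1), a p.1 * a p.2 := by
    rw [Rf, ← Finset.sum_filter_add_sum_filter_not
      (Finset.univ.filter
        (fun p : Fin n × Fin n => p.1 < p.2 ∧ τ p.2 < τ p.1))
      (fun p : Fin n × Fin n => σ (τ p.1) < σ (τ p.2))]
    congr 1
    · rw [Finset.filter_filter]
    · rw [Finset.filter_filter]
      refine Finset.sum_congr (Finset.filter_congr ?_) (fun _ _ => rfl)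
      intro p _
      constructor
      · rintro ⟨h1, h2⟩
        have hne : σ (τ p.1) ≠ σ (τ p.2) := fun h => absurd h1.2 (by
          have := σ.injective h; rw [this]; exact lt_irrefl _)
        exact ⟨⟨h1.1, (flip_lt hne).mp h2⟩, h1.2⟩
      · rintro ⟨h1, h2⟩
        exact ⟨⟨h1.1, h2⟩, fun h => absurd h (asymm h1.2)⟩
  -- reindex `Rf σ (a ∘ τ.symm)` and split according to the order of `p.1`, `p.2`
  have hD : Rf n σ (a ∘ τ.symm)
      = ∑ p ∈ Finset.univ.filter
          (fun p : Fin n × Fin n => τ p.1 < τ p.2 ∧ σ (τ p.2) < σ (τ p.1)),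
            a p.1 * a p.2 := by
    rw [Rf]
    apply Finset.sum_equiv (Equiv.prodCongr τ.symm τ.symm) <;> simp
  have hE : ∑ p ∈ Finset.univ.filter
        (fun p : Fin n × Fin n => τ p.1 < τ p.2 ∧ σ (τ p.2) < σ (τ p.1)), a p.1 * a p.2
      = ∑ p ∈ Finset.univ.filter
            (fun p : Fin n × Fin n =>
              (p.1 < p.2 ∧ σ (τ p.2) < σ (τ p.1)) ∧ τ p.1 < τ p.2), a p.1 * a p.2
        + ∑ p ∈ Finset.univ.filter
            (fun p : Fin n × Fin n =>
              (τ p.1 < τ p.2 ∧ σ (τ p.2) < σ (τ p.1)) ∧ p.2 < p.1), a p.1 * a p.2 := by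
    rw [← Finset.sum_filter_add_sum_filter_not
      (Finset.univ.filter
        (fun p : Fin n × Fin n => τ p.1 < τ p.2 ∧ σ (τ p.2) < σ (τ p.1)))
      (fun p : Fin n × Fin n => p.1 < p.2)]
    congr 1
    · rw [Finset.filter_filter]
      refine Finset.sum_congr (Finset.filter_congr ?_) (fun _ _ => rfl)
      intro p _
      exact ⟨fun h => ⟨⟨h.2, h.1.2⟩, h.1.1⟩, fun h => ⟨⟨h.2, h.1.2⟩, h.1.1⟩⟩
    · rw [Finset.filter_filter]
      refine Finset.sum_congr (Finset.filter_congr ?_) (fun _ _ => rfl)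
      intro p _
      constructor
      · rintro ⟨h1, h2⟩
        have hne : p.1 ≠ p.2 := fun h => absurd h1.1 (by rw [h]; exact lt_irrefl _)
        exact ⟨h1, (flip_lt hne).mp h2⟩
      · rintro ⟨h1, h2⟩
        exact ⟨h1, fun h => absurd h (asymm h2)⟩
  -- swap the second piece of `hE`
  have hF : ∑ p ∈ Finset.univ.filter
        (fun p : Fin n × Fin n =>
          (τ p.1 < τ p.2 ∧ σ (τ p.2) < σ (τ p.1)) ∧ p.2 < p.1), a p.1 * a p.2
      = ∑ p ∈ Finset.univ.filter
            (fun p : Fin n × Fin n =>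
              (p.1 < p.2 ∧ τ p.2 < τ p.1) ∧ σ (τ p.1) < σ (τ p.2)), a p.1 * a p.2 := by
    rw [sum_pair_swap
      (fun p : Fin n × Fin n => (τ p.1 < τ p.2 ∧ σ (τ p.2) < σ (τ p.1)) ∧ p.2 < p.1)
      (fun i j => a i * a j)]
    refine Finset.sum_congr (Finset.filter_congr ?_) ?_
    · intro p _
      exact ⟨fun h => ⟨⟨h.2, h.1.1⟩, h.1.2⟩, fun h => ⟨⟨h.1.2, h.2⟩, h.1.1⟩⟩
    · intro p _; ring
  rw [hA, hB, hC, hD, hE, hF]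
  have h6 := two_cancel (∑ p ∈ Finset.univ.filter
      (fun p : Fin n × Fin n =>
        (p.1 < p.2 ∧ τ p.2 < τ p.1) ∧ σ (τ p.1) < σ (τ p.2)), a p.1 * a p.2)
  linear_combination -h6

end Lemmas3

/-- The group `G n = H n ⋊ Sₙ` (the semidirect product for the action `actH`). -/
@[ext] structure G (n : ℕ) where
  h : H n
  s : Equiv.Perm (Fin n)

section ActLemmas

open Finset Equiv

variable {n : ℕ}

private lemma actH_mul (σ : Equiv.Perm (Fin n)) (g h : H n) :
    actH n σ (g * h) = actH n σ g * actH n σ h := by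
  refine H.ext ?_ ?_
  · funext i; rfl
  · show (g.b + h.b + Qf n g.a h.a) + Rf n σ (g.a + h.a)
       = (g.b + Rf n σ g.a) + (h.b + Rf n σ h.a) + Qf n (g.a ∘ σ.symm) (h.a ∘ σ.symm)
    rw [Rf_add, Qf_act]
    ring

private lemma actH_one_perm (g : H n) : actH n (1 : Equiv.Perm (Fin n)) g = g := by
  refine H.ext ?_ ?_
  · funext i; rfl
  · show g.b + Rf n 1 g.a = g.b
    have h0 : Rf n (1 : Equiv.Perm (Fin n)) g.a = 0 := by
      rw [Rf, Finset.filter_false_of_mem, Finset.sum_empty]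
      rintro p _ ⟨h1, h2⟩
      exact absurd h2 (asymm h1)
    rw [h0, add_zero]

private lemma actH_H_one (σ : Equiv.Perm (Fin n)) : actH n σ (1 : H n) = 1 := by
  refine H.ext ?_ ?_
  · funext i; rfl
  · show (0 : ZMod 2) + Rf n σ (0 : Fin n → ZMod 2) = 0
    simp [Rf]

private lemma actH_comp (σ τ : Equiv.Perm (Fin n)) (g : H n) :
    actH n (σ * τ) g = actH n σ (actH n τ g) := by
  refine H.ext ?_ ?_
  · funext i; rfl
  · show g.b + Rf n (σ * τ) g.a = (g.b + Rf n τ g.a) + Rf n σ (g.a ∘ τ.symm)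
    rw [Rf_comp]
    ring

end ActLemmas

namespace G

variable {n : ℕ}

instance : Mul (G n) := ⟨fun x y => ⟨x.h * actH n x.s y.h, x.s * y.s⟩⟩
instance : One (G n) := ⟨⟨1, 1⟩⟩
instance : Inv (G n) := ⟨fun x => ⟨actH n x.s⁻¹ x.h⁻¹, x.s⁻¹⟩⟩

@[simp] lemma mul_h (x y : G n) : (x * y).h = x.h * actH n x.s y.h := rfl
@[simp] lemma mul_s (x y : G n) : (x * y).s = x.s * y.s := rfl
@[simp] lemma one_h : (1 : G n).h = 1 := rfl
@[simp] lemma one_s : (1 : G n).s = 1 := rfl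

instance : Group (G n) where
  mul_assoc x y z := by
    refine G.ext ?_ ?_
    · show (x.h * actH n x.s y.h) * actH n (x.s * y.s) z.h
         = x.h * actH n x.s (y.h * actH n y.s z.h)
      rw [actH_mul, ← actH_comp]
      exact mul_assoc _ _ _
    · exact mul_assoc x.s y.s z.s
  one_mul x := by
    refine G.ext ?_ ?_
    · show (1 : H n) * actH n 1 x.h = x.h
      rw [actH_one_perm, one_mul]
    · exact one_mul x.s
  mul_one x := by
    refine G.ext ?_ ?_
    · show x.h * actH n x.s 1 = x.h
      rw [actH_H_one, mul_one]
    · exact mul_one x.s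
  inv_mul_cancel x := by
    refine G.ext ?_ ?_
    · show actH n x.s⁻¹ x.h⁻¹ * actH n x.s⁻¹ x.h = 1
      rw [← actH_mul, inv_mul_cancel, actH_H_one]
    · exact inv_mul_cancel x.s

end G

/-- The hyperoctahedral group `B n = (ZMod 2)ⁿ ⋊ Sₙ`, with
`(a₁, π₁) * (a₂, π₂) = (a₁ + a₂ ∘ π₁⁻¹, π₁ * π₂)`. -/
@[ext] structure B (n : ℕ) where
  a : Fin n → ZMod 2
  s : Equiv.Perm (Fin n)

namespace B

variable {n : ℕ}

instance : Mul (B n) := ⟨fun x y => ⟨x.a + y.a ∘ x.s.symm, x.s * y.s⟩⟩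
instance : One (B n) := ⟨⟨0, 1⟩⟩
instance : Inv (B n) := ⟨fun x => ⟨x.a ∘ x.s, x.s⁻¹⟩⟩

@[simp] lemma mul_a (x y : B n) : (x * y).a = x.a + y.a ∘ x.s.symm := rfl
@[simp] lemma mul_s (x y : B n) : (x * y).s = x.s * y.s := rfl
@[simp] lemma one_a : (1 : B n).a = 0 := rfl
@[simp] lemma one_s : (1 : B n).s = 1 := rfl

instance : Group (B n) where
  mul_assoc x y z := by
    refine B.ext ?_ ?_
    · funext i
      show x.a i + y.a (x.s.symm i) + z.a (y.s.symm (x.s.symm i))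
         = x.a i + (y.a (x.s.symm i) + z.a (y.s.symm (x.s.symm i)))
      exact add_assoc _ _ _
    · exact mul_assoc x.s y.s z.s
  one_mul x := by
    refine B.ext ?_ ?_
    · funext i
      show (0 : ZMod 2) + x.a i = x.a i
      exact zero_add _
    · exact one_mul x.s
  mul_one x := by
    refine B.ext ?_ ?_
    · funext i
      show x.a i + (0 : ZMod 2) = x.a i
      exact add_zero _
    · exact mul_one x.s
  inv_mul_cancel x := by
    refine B.ext ?_ ?_
    · funext i
      show x.a (x.s i) + x.a ((x.s⁻¹).symm i) = 0
      have h : (x.s⁻¹).symm i = x.s i := rfl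
      rw [h]
      generalize x.a (x.s i) = u; revert u; decide
    · exact inv_mul_cancel x.s

end B

/-- The projection `p : G n → B n`, `((a, b), σ) ↦ (a, σ)`. -/
def pG (n : ℕ) (g : G n) : B n := ⟨g.h.a, g.s⟩

/-- The central element `ε̂ = ((0,1), 1)` of `G n`. -/
def epsG (n : ℕ) : G n := ⟨⟨0, 1⟩, 1⟩

/-- The orbit of `k` under the cyclic group generated by `σ`, as a `Finset`. -/
noncomputable def orb (n : ℕ) (σ : Equiv.Perm (Fin n)) (k : Fin n) : Finset (Fin n) :=
  letI := Classical.decPred fun j : Fin n => ∃ m : ℤ, (σ ^ m) k = j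
  Finset.univ.filter (fun j => ∃ m : ℤ, (σ ^ m) k = j)

/-- The set of orbits of `σ` on `Fin n`. -/
noncomputable def orbs (n : ℕ) (σ : Equiv.Perm (Fin n)) : Finset (Finset (Fin n)) :=
  Finset.univ.image (orb n σ)

/-- The orbit of `k` under the group generated by the commuting permutations `σ` and `π`;
it is the union of the `σ`-orbits belonging to the orbit (under the action of the group
generated by `π` on the set of `σ`-orbits) of the `σ`-orbit of `k`. -/
noncomputable def orb2 (n : ℕ) (σ π : Equiv.Perm (Fin n)) (k : Fin n) : Finset (Fin n) :=
  letI := Classical.decPred fun j : Fin n => ∃ a b : ℤ, (σ ^ a * π ^ b) k = j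
  Finset.univ.filter (fun j => ∃ a b : ℤ, (σ ^ a * π ^ b) k = j)

/-- The set of orbits of the group generated by `σ` and `π` on `Fin n`. -/
noncomputable def orbs2 (n : ℕ) (σ π : Equiv.Perm (Fin n)) : Finset (Finset (Fin n)) :=
  Finset.univ.image (orb2 n σ π)
section OrbitLemmas

open Finset Equiv Equiv.Perm

variable {n : ℕ} {σ π : Equiv.Perm (Fin n)}

private lemma mem_orb {k j : Fin n} : j ∈ orb n σ k ↔ σ.SameCycle k j := by
  classical
  simp [orb, Equiv.Perm.SameCycle]

private lemma mem_orb_self (k : Fin n) : k ∈ orb n σ k :=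
  mem_orb.mpr (Equiv.Perm.SameCycle.refl σ k)

private lemma orb_eq_of_mem {k j : Fin n} (h : j ∈ orb n σ k) :
    orb n σ j = orb n σ k := by
  rw [mem_orb] at h
  ext i
  rw [mem_orb, mem_orb]
  exact ⟨fun h' => h.trans h', fun h' => h.symm.trans h'⟩

private lemma one_le_card_orb (k : Fin n) : 1 ≤ (orb n σ k).card :=
  Finset.card_pos.mpr ⟨k, mem_orb_self k⟩

private lemma orb_eq_singleton {k : Fin n} (h : σ k = k) : orb n σ k = {k} := by
  ext j
  rw [mem_orb, Finset.mem_singleton]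
  constructor
  · intro h'
    exact (h'.eq_of_left h).symm
  · rintro rfl
    exact Equiv.Perm.SameCycle.rfl

private lemma mem_orb2 {k j : Fin n} :
    j ∈ orb2 n σ π k ↔ ∃ a b : ℤ, (σ ^ a * π ^ b) k = j := by
  classical
  simp only [orb2, Finset.mem_filter, Finset.mem_univ, true_and]

private lemma mem_orb2_self (k : Fin n) : k ∈ orb2 n σ π k :=
  mem_orb2.mpr ⟨0, 0, by simp⟩

private lemma pows_mul (hc : Commute σ π) (a b c d : ℤ) :
    (σ ^ c * π ^ d) * (σ ^ a * π ^ b) = σ ^ (c + a) * π ^ (d + b) := by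
  have h := ((hc.symm).zpow_zpow d a).eq
  rw [zpow_add, zpow_add]
  rw [mul_assoc, ← mul_assoc (π ^ d), h, mul_assoc, mul_assoc]

private lemma orb2_symm (hc : Commute σ π) {k j : Fin n} (h : j ∈ orb2 n σ π k) :
    k ∈ orb2 n σ π j := by
  rw [mem_orb2] at h ⊢
  obtain ⟨a, b, hab⟩ := h
  refine ⟨-a, -b, ?_⟩
  have : (σ ^ (-a) * π ^ (-b)) * (σ ^ a * π ^ b) = 1 := by
    rw [pows_mul hc]; simp
  calc (σ ^ (-a) * π ^ (-b)) j = (σ ^ (-a) * π ^ (-b)) ((σ ^ a * π ^ b) k) := by rw [hab]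
    _ = ((σ ^ (-a) * π ^ (-b)) * (σ ^ a * π ^ b)) k := rfl
    _ = k := by rw [this]; rfl

private lemma orb2_eq_of_mem (hc : Commute σ π) {k j : Fin n} (h : j ∈ orb2 n σ π k) :
    orb2 n σ π j = orb2 n σ π k := by
  ext i
  rw [mem_orb2, mem_orb2]
  rw [mem_orb2] at h
  obtain ⟨a, b, hab⟩ := h
  constructor
  · rintro ⟨c, d, rfl⟩
    exact ⟨c + a, d + b, by rw [← pows_mul hc, Equiv.Perm.mul_apply, hab]⟩
  · rintro ⟨c, d, rfl⟩
    have h' := orb2_symm hc (mem_orb2.mpr ⟨a, b, hab⟩)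
    rw [mem_orb2] at h'
    obtain ⟨a', b', hab'⟩ := h'
    exact ⟨c + a', d + b', by rw [← pows_mul hc, Equiv.Perm.mul_apply, hab']⟩

private lemma orb_subset_orb2 (k : Fin n) : orb n σ k ⊆ orb2 n σ π k := by
  intro j hj
  rw [mem_orb] at hj
  obtain ⟨m, hm⟩ := hj
  exact mem_orb2.mpr ⟨m, 0, by simpa using hm⟩

private lemma orb_zpow_mem (a : ℤ) (k : Fin n) : (σ ^ a) k ∈ orb n σ k :=
  mem_orb.mpr ⟨a, rfl⟩

private lemma orb_pi_zpow (hc : Commute σ π) (b : ℤ) (k : Fin n) :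
    orb n σ ((π ^ b) k) = (orb n σ k).image (π ^ b) := by
  ext j
  rw [mem_orb, Finset.mem_image]
  constructor
  · rintro ⟨m, hm⟩
    refine ⟨(σ ^ m) k, orb_zpow_mem m k, ?_⟩
    have h := (hc.zpow_zpow m b).eq
    calc (π ^ b) ((σ ^ m) k) = ((π ^ b) * (σ ^ m)) k := rfl
      _ = ((σ ^ m) * (π ^ b)) k := by rw [← h]
      _ = (σ ^ m) ((π ^ b) k) := rfl
      _ = j := hm
  · rintro ⟨x, hx, rfl⟩
    rw [mem_orb] at hx
    obtain ⟨m, hm⟩ := hx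
    refine ⟨m, ?_⟩
    have h := (hc.zpow_zpow m b).eq
    calc (σ ^ m) ((π ^ b) k) = ((σ ^ m) * (π ^ b)) k := rfl
      _ = ((π ^ b) * (σ ^ m)) k := by rw [h]
      _ = (π ^ b) ((σ ^ m) k) := rfl
      _ = (π ^ b) x := by rw [hm]

private lemma card_orb_eq_of_mem_orb2 (hc : Commute σ π) {k j : Fin n}
    (h : j ∈ orb2 n σ π k) : (orb n σ j).card = (orb n σ k).card := by
  rw [mem_orb2] at h
  obtain ⟨a, b, hab⟩ := h
  have h1 : j ∈ orb n σ ((π ^ b) k) := by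
    rw [← hab]
    exact orb_zpow_mem a _
  rw [orb_eq_of_mem h1, orb_pi_zpow hc,
    Finset.card_image_of_injective _ (Equiv.injective _)]

private lemma mem_orbs2_iff {I : Finset (Fin n)} :
    I ∈ orbs2 n σ π ↔ ∃ k, orb2 n σ π k = I := by
  simp [orbs2]

end OrbitLemmas
section ParityLemmas

open Finset Equiv Equiv.Perm

private lemma sign_eq_signAux' {m : ℕ} (τ : Equiv.Perm (Fin m)) :
    Equiv.Perm.sign τ = Equiv.Perm.signAux τ := by
  refine Equiv.Perm.swap_induction_on τ (by simp [Equiv.Perm.signAux_one])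
    (fun f x y hxy ih => ?_)
  rw [Equiv.Perm.signAux_mul, map_mul, ih, Equiv.Perm.signAux_swap hxy,
    Equiv.Perm.sign_swap hxy]

private lemma signAux_eq_pow {m : ℕ} (τ : Equiv.Perm (Fin m)) :
    Equiv.Perm.signAux τ
      = (-1 : ℤˣ) ^ ((Equiv.Perm.finPairsLT m).filter
          (fun x => τ x.1 ≤ τ x.2)).card := by
  rw [Equiv.Perm.signAux, Finset.prod_ite, Finset.prod_const, Finset.prod_const, one_pow,
    mul_one]

private lemma inversions_card_eq {m : ℕ} (τ : Equiv.Perm (Fin m)) :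
    ((Equiv.Perm.finPairsLT m).filter (fun x => τ x.1 ≤ τ x.2)).card
      = (Finset.univ.filter
          (fun p : Fin m × Fin m => p.1 < p.2 ∧ τ p.2 < τ p.1)).card := by
  apply Finset.card_bij (fun x _ => (x.2, x.1))
  · rintro ⟨x1, x2⟩ hx
    simp only [Finset.mem_filter, Equiv.Perm.mem_finPairsLT] at hx
    obtain ⟨hlt, hle⟩ := hx
    simp only [Finset.mem_filter, Finset.mem_univ, true_and]
    refine ⟨hlt, lt_of_le_of_ne hle ?_⟩
    intro h
    exact absurd (τ.injective h) (ne_of_gt hlt)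
  · rintro ⟨x1, x2⟩ hx ⟨y1, y2⟩ hy h
    simp only [Prod.mk.injEq] at h
    exact Sigma.ext h.2 (heq_of_eq h.1)
  · rintro ⟨p1, p2⟩ hp
    simp only [Finset.mem_filter, Finset.mem_univ, true_and] at hp
    exact ⟨⟨p2, p1⟩, by simp [Finset.mem_filter, Equiv.Perm.mem_finPairsLT, hp.1, hp.2.le], rfl⟩

private lemma sign_eq_pow_inversions {α : Type*} [Fintype α] [DecidableEq α] [LinearOrder α]
    (τ : Equiv.Perm α) :
    Equiv.Perm.sign τ
      = (-1 : ℤˣ) ^ (Finset.univ.filter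
          (fun p : α × α => p.1 < p.2 ∧ τ p.2 < τ p.1)).card := by
  classical
  set m := Fintype.card α with hm
  let e : Fin m ≃o α := monoEquivOfFin α rfl
  let τ' : Equiv.Perm (Fin m) := e.toEquiv.symm.permCongr τ
  have hs : Equiv.Perm.sign τ' = Equiv.Perm.sign τ := Equiv.Perm.sign_permCongr _ _
  have hcard : (Finset.univ.filter
        (fun p : Fin m × Fin m => p.1 < p.2 ∧ τ' p.2 < τ' p.1)).card
      = (Finset.univ.filter
          (fun p : α × α => p.1 < p.2 ∧ τ p.2 < τ p.1)).card := by
    apply Finset.card_bij (fun p _ => (e p.1, e p.2))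
    · rintro ⟨p1, p2⟩ hp
      simp only [Finset.mem_filter, Finset.mem_univ, true_and] at hp ⊢
      have h1 : e p1 < e p2 := e.strictMono hp.1
      have h2 : τ (e p2) < τ (e p1) := by
        have := hp.2
        simp only [τ', Equiv.permCongr_apply, OrderIso.toEquiv_symm,
          Equiv.symm_symm] at this
        exact (OrderIso.lt_iff_lt e.symm).mp this
      exact ⟨h1, h2⟩
    · rintro ⟨x1, x2⟩ _ ⟨y1, y2⟩ _ h
      simp only [Prod.mk.injEq, EmbeddingLike.apply_eq_iff_eq] at h
      exact Prod.ext h.1 h.2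
    · rintro ⟨q1, q2⟩ hq
      simp only [Finset.mem_filter, Finset.mem_univ, true_and] at hq
      refine ⟨(e.symm q1, e.symm q2), ?_, by simp⟩
      simp only [Finset.mem_filter, Finset.mem_univ, true_and]
      constructor
      · exact (OrderIso.lt_iff_lt e.symm).mpr hq.1
      · show e.symm (τ (e (e.symm q2))) < e.symm (τ (e (e.symm q1)))
        rw [OrderIso.apply_symm_apply, OrderIso.apply_symm_apply]
        exact (OrderIso.lt_iff_lt e.symm).mpr hq.2
  rw [← hs, ← hcard, sign_eq_signAux', signAux_eq_pow, inversions_card_eq]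

private lemma sign_eq_pow_sum_cycles {α : Type*} [Fintype α] [DecidableEq α]
    (f : Equiv.Perm α) :
    Equiv.Perm.sign f
      = (-1 : ℤˣ) ^ (∑ c ∈ f.cycleFactorsFinset, (c.support.card - 1)) := by
  rw [Equiv.Perm.sign_of_cycleType]
  have hsum : f.cycleType.sum = ∑ c ∈ f.cycleFactorsFinset, c.support.card := by
    rw [Equiv.Perm.cycleType_def]; rfl
  have hcard : Multiset.card f.cycleType = f.cycleFactorsFinset.card := by
    rw [Equiv.Perm.cycleType_def, Multiset.card_map]; rfl
  have h1 : ∀ c ∈ f.cycleFactorsFinset, 1 ≤ c.support.card := fun c hc =>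
    Finset.card_pos.mpr
      (Equiv.Perm.IsCycle.nonempty_support (Equiv.Perm.mem_cycleFactorsFinset_iff.mp hc).1)
  have hS : ∑ c ∈ f.cycleFactorsFinset, c.support.card
      = (∑ c ∈ f.cycleFactorsFinset, (c.support.card - 1)) + f.cycleFactorsFinset.card := by
    calc ∑ c ∈ f.cycleFactorsFinset, c.support.card
        = ∑ c ∈ f.cycleFactorsFinset, ((c.support.card - 1) + 1) :=
          Finset.sum_congr rfl (fun c hc => (Nat.sub_add_cancel (h1 c hc)).symm)
      _ = (∑ c ∈ f.cycleFactorsFinset, (c.support.card - 1))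
          + ∑ _c ∈ f.cycleFactorsFinset, 1 := Finset.sum_add_distrib
      _ = _ := by rw [Finset.sum_const, smul_eq_mul, mul_one]
  rw [hsum, hcard, hS, add_assoc, pow_add, pow_add, Int.units_mul_self, mul_one]

private lemma zmod_of_units_pow {K M : ℕ} (h : (-1 : ℤˣ) ^ K = (-1 : ℤˣ) ^ M) :
    ((K : ZMod 2)) = (M : ZMod 2) := by
  have h2 : K % 2 = M % 2 := by
    rcases Nat.even_or_odd K with hK | hK <;> rcases Nat.even_or_odd M with hM | hM
    · rw [Nat.even_iff.mp hK, Nat.even_iff.mp hM]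
    · exfalso; rw [hK.neg_one_pow, hM.neg_one_pow] at h
      exact (by decide : (1 : ℤˣ) ≠ -1) h
    · exfalso; rw [hK.neg_one_pow, hM.neg_one_pow] at h
      exact (by decide : (1 : ℤˣ) ≠ -1) h.symm
    · rw [Nat.odd_iff.mp hK, Nat.odd_iff.mp hM]
  calc (K : ZMod 2) = ((K % 2 : ℕ) : ZMod 2) := (ZMod.natCast_mod K 2).symm
    _ = ((M % 2 : ℕ) : ZMod 2) := by rw [h2]
    _ = (M : ZMod 2) := ZMod.natCast_mod M 2

private lemma zmod2_mul_ite (a b : ZMod 2) :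
    a * b = if (a = 1 ∧ b = 1) then 1 else 0 := by
  revert a b; decide

private lemma Rf_eq_card {n : ℕ} (σ : Equiv.Perm (Fin n)) (v : Fin n → ZMod 2) :
    Rf n σ v = ((Finset.univ.filter
      (fun p : Fin n × Fin n =>
        (p.1 < p.2 ∧ σ p.2 < σ p.1) ∧ (v p.1 = 1 ∧ v p.2 = 1))).card : ZMod 2) := by
  rw [Rf]
  have : ∀ p ∈ Finset.univ.filter
      (fun p : Fin n × Fin n => p.1 < p.2 ∧ σ p.2 < σ p.1),
      v p.1 * v p.2 = if (v p.1 = 1 ∧ v p.2 = 1) then (1 : ZMod 2) else 0 :=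
    fun p _ => zmod2_mul_ite _ _
  rw [Finset.sum_congr rfl this, Finset.sum_boole, Finset.filter_filter]

private lemma v_pow_invariant {n : ℕ} {σ : Equiv.Perm (Fin n)} {v : Fin n → ZMod 2}
    (hv : ∀ x, v (σ x) = v x) : ∀ (m : ℤ) (x), v ((σ ^ m) x) = v x := by
  have hnat : ∀ (m : ℕ) (x), v ((σ ^ m) x) = v x := by
    intro m
    induction m with
    | zero => intro x; simp
    | succ m ih =>
      intro x
      rw [pow_succ, Equiv.Perm.mul_apply, ih, hv]
  intro m x
  cases m with
  | ofNat m => exact hnat m x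
  | negSucc m =>
    rw [zpow_negSucc]
    have := hnat (m + 1) (((σ ^ (m + 1))⁻¹) x)
    rw [← Equiv.Perm.mul_apply, mul_inv_cancel, Equiv.Perm.one_apply] at this
    exact this.symm

private lemma sameCycle_subtype {n : ℕ} {σ : Equiv.Perm (Fin n)} {p : Fin n → Prop}
    (hp : ∀ i, p i ↔ p (σ i)) (x y : {i // p i}) :
    (σ.subtypePerm (fun i => (hp i).symm)).SameCycle x y ↔ σ.SameCycle x.val y.val := by
  constructor
  · rintro ⟨i, hi⟩
    refine ⟨i, ?_⟩
    rw [Equiv.Perm.subtypePerm_zpow] at hi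
    exact congrArg Subtype.val hi
  · rintro ⟨i, hi⟩
    refine ⟨i, ?_⟩
    rw [Equiv.Perm.subtypePerm_zpow]
    exact Subtype.ext hi

private lemma cycleOf_support_image {n : ℕ} {σ : Equiv.Perm (Fin n)} {p : Fin n → Prop}
    [DecidablePred p]
    (hp : ∀ i, p i ↔ p (σ i)) (hvp : ∀ k j, σ.SameCycle k j → p k → p j)
    (x : {i // p i}) (hx : σ.subtypePerm (fun i => (hp i).symm) x ≠ x) :
    ((σ.subtypePerm (fun i => (hp i).symm)).cycleOf x).support.image Subtype.val = orb n σ x.val := by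
  ext j
  rw [Finset.mem_image, mem_orb]
  constructor
  · rintro ⟨y, hy, rfl⟩
    rw [Equiv.Perm.mem_support_cycleOf_iff] at hy
    exact (sameCycle_subtype hp x y).mp hy.1
  · intro hj
    have hpj : p j := hvp _ _ hj x.2
    refine ⟨⟨j, hpj⟩, ?_, rfl⟩
    rw [Equiv.Perm.mem_support_cycleOf_iff]
    exact ⟨(sameCycle_subtype hp x ⟨j, hpj⟩).mpr hj, Equiv.Perm.mem_support.mpr hx⟩

end ParityLemmas
section KeyParity

open Finset Equiv Equiv.Perm

private lemma key_parity {n : ℕ} (σ : Equiv.Perm (Fin n)) (v : Fin n → ZMod 2)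
    (hv : ∀ x, v (σ x) = v x) :
    Rf n σ v
      = ((∑ C ∈ (Finset.univ.filter (fun k => v k = 1)).image (orb n σ),
          (C.card - 1) : ℕ) : ZMod 2) := by
  classical
  have hp : ∀ i, v i = 1 ↔ v (σ i) = 1 := fun i => by rw [hv i]
  set σ' := σ.subtypePerm (p := fun i => v i = 1) (fun i => (hp i).symm) with hσ'def
  have hvsc : ∀ k j, σ.SameCycle k j → v k = 1 → v j = 1 := by
    rintro k j ⟨i, rfl⟩ hk
    rw [v_pow_invariant hv i k]; exact hk
  set orbsS := (Finset.univ.filter (fun k => v k = 1)).image (orb n σ) with horbsS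
  -- inversion counts agree
  have eKK' : (Finset.univ.filter (fun q : {i // v i = 1} × {i // v i = 1} =>
        q.1 < q.2 ∧ σ' q.2 < σ' q.1)).card
      = (Finset.univ.filter (fun p : Fin n × Fin n =>
        (p.1 < p.2 ∧ σ p.2 < σ p.1) ∧ (v p.1 = 1 ∧ v p.2 = 1))).card := by
    apply Finset.card_bij (fun q _ => ((q.1.1 : Fin n), (q.2.1 : Fin n)))
    · rintro ⟨q1, q2⟩ hq
      simp only [Finset.mem_filter, Finset.mem_univ, true_and] at hq ⊢
      refine ⟨⟨Subtype.coe_lt_coe.mpr hq.1, ?_⟩, q1.2, q2.2⟩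
      exact Subtype.coe_lt_coe.mpr hq.2
    · rintro ⟨q1, q2⟩ _ ⟨r1, r2⟩ _ h
      simp only [Prod.mk.injEq] at h
      exact Prod.ext (Subtype.ext h.1) (Subtype.ext h.2)
    · rintro ⟨p1, p2⟩ hp'
      simp only [Finset.mem_filter, Finset.mem_univ, true_and] at hp'
      refine ⟨(⟨p1, hp'.2.1⟩, ⟨p2, hp'.2.2⟩), ?_, rfl⟩
      simp only [Finset.mem_filter, Finset.mem_univ, true_and]
      exact ⟨Subtype.mk_lt_mk.mpr hp'.1.1, Subtype.mk_lt_mk.mpr hp'.1.2⟩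
  -- reduce the orbit sum to orbits of size ≥ 2
  have hM : ∑ C ∈ orbsS, (C.card - 1)
      = ∑ C ∈ orbsS.filter (fun C => 2 ≤ C.card), (C.card - 1) := by
    rw [← Finset.sum_filter_add_sum_filter_not orbsS (fun C => 2 ≤ C.card)]
    have hz : ∑ C ∈ orbsS.filter (fun C => ¬ 2 ≤ C.card), (C.card - 1) = 0 := by
      apply Finset.sum_eq_zero
      intro C hC
      rw [Finset.mem_filter] at hC
      omega
    rw [hz, add_zero]
  -- cycle sum equals orbit sum
  have e5 : ∑ c ∈ σ'.cycleFactorsFinset, (c.support.card - 1)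
      = ∑ C ∈ orbsS.filter (fun C => 2 ≤ C.card), (C.card - 1) := by
    apply Finset.sum_bij (fun c _ => c.support.image Subtype.val)
    · intro c hc
      obtain ⟨x, hx⟩ := (Equiv.Perm.mem_cycleFactorsFinset_iff.mp hc).1.nonempty_support
      have hceq : c = σ'.cycleOf x := Equiv.Perm.cycle_is_cycleOf hx hc
      have hσ'x : σ' x ≠ x := by
        have h2 := (Equiv.Perm.mem_cycleFactorsFinset_iff.mp hc).2 x hx
        rw [← h2]; exact Equiv.Perm.mem_support.mp hx
      have himg : c.support.image Subtype.val = orb n σ x.val := by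
        rw [hceq]; exact cycleOf_support_image hp hvsc x hσ'x
      rw [Finset.mem_filter, himg]
      constructor
      · exact Finset.mem_image.mpr ⟨x.val, Finset.mem_filter.mpr ⟨Finset.mem_univ _, x.2⟩, rfl⟩
      · rw [← himg, Finset.card_image_of_injective _ Subtype.val_injective]
        exact (Equiv.Perm.mem_cycleFactorsFinset_iff.mp hc).1.two_le_card_support
    · intro c hc c' hc' heq
      have hsupp : c.support = c'.support := by
        ext y
        constructor
        · intro hy
          have hmem : y.val ∈ c'.support.image Subtype.val := heq ▸
            Finset.mem_image.mpr ⟨y, hy, rfl⟩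
          obtain ⟨z, hz, hzy⟩ := Finset.mem_image.mp hmem
          rwa [← Subtype.val_injective hzy]
        · intro hy
          have hmem : y.val ∈ c.support.image Subtype.val := heq ▸
            Finset.mem_image.mpr ⟨y, hy, rfl⟩
          obtain ⟨z, hz, hzy⟩ := Finset.mem_image.mp hmem
          rwa [← Subtype.val_injective hzy]
      obtain ⟨x, hx⟩ := (Equiv.Perm.mem_cycleFactorsFinset_iff.mp hc).1.nonempty_support
      rw [Equiv.Perm.cycle_is_cycleOf hx hc,
        Equiv.Perm.cycle_is_cycleOf (hsupp ▸ hx) hc']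
    · intro C hC
      rw [Finset.mem_filter] at hC
      obtain ⟨hC1, hC2⟩ := hC
      obtain ⟨k, hk, hkC⟩ := Finset.mem_image.mp hC1
      have hvk : v k = 1 := (Finset.mem_filter.mp hk).2
      have hσk : σ k ≠ k := by
        intro h
        rw [← hkC, orb_eq_singleton h, Finset.card_singleton] at hC2
        omega
      have hσ'x : σ' (⟨k, hvk⟩ : {i // v i = 1}) ≠ ⟨k, hvk⟩ := by
        intro h
        exact hσk (congrArg Subtype.val h)
      refine ⟨σ'.cycleOf ⟨k, hvk⟩,
        Equiv.Perm.cycleOf_mem_cycleFactorsFinset_iff.mpr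
          (Equiv.Perm.mem_support.mpr hσ'x), ?_⟩
      rw [cycleOf_support_image hp hvsc _ hσ'x, hkC]
    · intro c hc
      rw [Finset.card_image_of_injective _ Subtype.val_injective]
  have e3 := sign_eq_pow_inversions σ'
  have e4 := sign_eq_pow_sum_cycles σ'
  have echain := e3.symm.trans e4
  rw [eKK', e5, ← hM] at echain
  rw [Rf_eq_card]
  exact zmod_of_units_pow echain

end KeyParity
section FinalLemmas

open Finset Equiv Equiv.Perm

variable {n : ℕ}

private lemma Rf_zero (π : Equiv.Perm (Fin n)) : Rf n π (0 : Fin n → ZMod 2) = 0 := by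
  simp [Rf]

private lemma Rf_one (a : Fin n → ZMod 2) : Rf n (1 : Equiv.Perm (Fin n)) a = 0 := by
  rw [Rf, Finset.filter_false_of_mem, Finset.sum_empty]
  rintro p _ ⟨h1, h2⟩
  exact absurd h2 (asymm h1)

private lemma comp_zero_perm (τ : Equiv.Perm (Fin n)) :
    (0 : Fin n → ZMod 2) ∘ τ.symm = 0 := rfl

private lemma comp_one_perm (a : Fin n → ZMod 2) :
    a ∘ (1 : Equiv.Perm (Fin n)).symm = a := rfl

private lemma epsG_pow (N : ℕ) : epsG n ^ N = (⟨⟨0, (N : ZMod 2)⟩, 1⟩ : G n) := by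
  induction N with
  | zero =>
    refine G.ext ?_ ?_
    · refine H.ext ?_ ?_ <;> simp
    · simp
  | succ N ih =>
    rw [pow_succ, ih]
    refine G.ext ?_ ?_
    · refine H.ext ?_ ?_
      · show (0 : Fin n → ZMod 2) + (0 : Fin n → ZMod 2) ∘ (1 : Equiv.Perm (Fin n)).symm = 0
        funext i; simp
      · show (N : ZMod 2) + ((1 : ZMod 2) + Rf n 1 0)
            + Qf n 0 ((0 : Fin n → ZMod 2) ∘ (1 : Equiv.Perm (Fin n)).symm) = ((N + 1 : ℕ) : ZMod 2)
        rw [comp_zero_perm, Rf_zero, H.Qf_zero_right, Nat.cast_add, Nat.cast_one]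
        ring
    · show (1 : Equiv.Perm (Fin n)) * 1 = 1
      simp

private lemma commutator_formula (mt lt : G n) (σ π : Equiv.Perm (Fin n))
    (v : Fin n → ZMod 2)
    (hm : pG n mt = ⟨0, σ⟩) (hl : pG n lt = ⟨v, π⟩)
    (hσπ : σ * π = π * σ) (hvσ : v ∘ σ.symm = v) :
    ⁅mt, lt⁆ = (⟨⟨0, Rf n σ v⟩, 1⟩ : G n) := by
  have ham : mt.h.a = 0 := congrArg B.a hm
  have hsm : mt.s = σ := congrArg B.s hm
  have hal : lt.h.a = v := congrArg B.a hl
  have hsl : lt.s = π := congrArg B.s hl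
  have hv' : ∀ x, v (σ.symm x) = v x := fun x => congrFun hvσ x
  have h1 : mt * lt = (⟨⟨0, Rf n σ v⟩, 1⟩ : G n) * (lt * mt) := by
    refine G.ext (H.ext ?_ ?_) ?_
    · show mt.h.a + (actH n mt.s lt.h).a
          = (0 : Fin n → ZMod 2)
            + ((lt.h.a + (actH n lt.s mt.h).a) ∘ (1 : Equiv.Perm (Fin n)).symm)
      show mt.h.a + lt.h.a ∘ mt.s.symm
          = (0 : Fin n → ZMod 2)
            + ((lt.h.a + mt.h.a ∘ lt.s.symm) ∘ (1 : Equiv.Perm (Fin n)).symm)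
      funext i
      simp [ham, hal, hsm, hsl, hv']
      rfl
    · show mt.h.b + ((actH n mt.s lt.h).b) + Qf n mt.h.a ((actH n mt.s lt.h).a)
          = Rf n σ v + (actH n 1 ((lt * mt).h)).b + Qf n 0 ((actH n 1 ((lt * mt).h)).a)
      show mt.h.b + (lt.h.b + Rf n mt.s lt.h.a) + Qf n mt.h.a (lt.h.a ∘ mt.s.symm)
          = Rf n σ v
            + ((lt.h.b + (mt.h.b + Rf n lt.s mt.h.a)
                + Qf n lt.h.a (mt.h.a ∘ lt.s.symm)) + Rf n 1 ((lt * mt).h.a))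
            + Qf n 0 (((lt * mt).h.a) ∘ (1 : Equiv.Perm (Fin n)).symm)
      rw [ham, hal, hsm, hsl, comp_zero_perm, Rf_zero, Rf_one, H.Qf_zero_left,
        H.Qf_zero_right, H.Qf_zero_left]
      ring
    · show mt.s * lt.s = 1 * (lt.s * mt.s)
      rw [hsm, hsl, one_mul, hσπ]
  have h2 : ⁅mt, lt⁆ = (mt * lt) * (lt * mt)⁻¹ := by
    rw [commutatorElement_def, mul_inv_rev, mul_assoc]
  rw [h2, h1, mul_inv_cancel_right]

end FinalLemmas

/-- Let `m = (0, σ)` and `ℓ = (v, π)` commute in `B n`. For each orbit `O` of `⟨π⟩` on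
the set of `σ`-orbits (encoded by the union `I ∈ orbs2 n σ π` of its members), all
`σ`-orbits in `O` have the same cardinality `e_O = |orb σ (rep I)|`, and with
`d_O = #{C ∈ O : v ≡ 1 on C}` one has `φ(m, ℓ) = ε̂^N`, `N = Σ_O (e_O − 1)·d_O`. -/
theorem phi_formula_full (n : ℕ) (hn : 0 < n) (σ : Equiv.Perm (Fin n))
    (v : Fin n → ZMod 2) (π : Equiv.Perm (Fin n))
    (hc : Commute ((⟨0, σ⟩ : B n)) ⟨v, π⟩)
    (rep : Finset (Fin n) → Fin n) (hrep : ∀ I ∈ orbs2 n σ π, rep I ∈ I)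
    (mt lt : G n) (hm : pG n mt = ⟨0, σ⟩) (hl : pG n lt = ⟨v, π⟩) :
    (∀ I ∈ orbs2 n σ π, ∀ k ∈ I, (orb n σ k).card = (orb n σ (rep I)).card) ∧
    ⁅mt, lt⁆ = epsG n ^
      (∑ I ∈ orbs2 n σ π,
        ((orb n σ (rep I)).card - 1) *
          ((I.filter (fun j => v j = 1)).image (fun j => orb n σ j)).card) := by
  classical
  have hσπ : σ * π = π * σ := by
    have := congrArg B.s hc
    simpa using this
  have hcσπ : Commute σ π := hσπ
  have hva : (0 : Fin n → ZMod 2) + v ∘ σ.symm = v + (0 : Fin n → ZMod 2) ∘ π.symm :=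
    congrArg B.a hc
  have hvσ : v ∘ σ.symm = v := by
    funext i
    have h := congrFun hva i
    simpa using h
  have hv : ∀ x, v (σ x) = v x := by
    intro x
    have h := congrFun hvσ (σ x)
    simp only [Function.comp_apply, Equiv.symm_apply_apply] at h
    exact h.symm
  have part1 : ∀ I ∈ orbs2 n σ π, ∀ k ∈ I, (orb n σ k).card = (orb n σ (rep I)).card := by
    intro I hI k hk
    obtain ⟨k₀, hk₀⟩ := mem_orbs2_iff.mp hI
    have h1 : (orb n σ k).card = (orb n σ k₀).card :=
      card_orb_eq_of_mem_orb2 hcσπ (by rw [hk₀]; exact hk)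
    have h2 : (orb n σ (rep I)).card = (orb n σ k₀).card :=
      card_orb_eq_of_mem_orb2 hcσπ (by rw [hk₀]; exact hrep I hI)
    rw [h1, h2]
  refine ⟨part1, ?_⟩
  have hpart : (Finset.univ.filter (fun k => v k = 1)).image (orb n σ)
      = (orbs2 n σ π).biUnion
          (fun I : Finset (Fin n) => (I.filter (fun j => v j = 1)).image (fun j => orb n σ j)) := by
    ext C
    rw [Finset.mem_biUnion]
    constructor
    · intro hC
      obtain ⟨k, hk, hkC⟩ := Finset.mem_image.mp hC
      have hvk : v k = 1 := (Finset.mem_filter.mp hk).2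
      exact ⟨orb2 n σ π k, mem_orbs2_iff.mpr ⟨k, rfl⟩,
        Finset.mem_image.mpr ⟨k, Finset.mem_filter.mpr ⟨mem_orb2_self k, hvk⟩, hkC⟩⟩
    · rintro ⟨I, hI, hC⟩
      obtain ⟨j, hj, hjC⟩ := Finset.mem_image.mp hC
      have hvj : v j = 1 := (Finset.mem_filter.mp hj).2
      exact Finset.mem_image.mpr ⟨j, Finset.mem_filter.mpr ⟨Finset.mem_univ _, hvj⟩, hjC⟩
  have hdisj : Set.PairwiseDisjoint ↑(orbs2 n σ π)
      (fun I : Finset (Fin n) => (I.filter (fun j => v j = 1)).image (fun j => orb n σ j)) := by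
    intro I hI I' hI' hne
    simp only [Function.onFun]
    rw [Finset.disjoint_left]
    intro C hCI hCI'
    obtain ⟨j, hj, hjC⟩ := Finset.mem_image.mp hCI
    obtain ⟨j', hj', hjC'⟩ := Finset.mem_image.mp hCI'
    rw [Finset.mem_coe] at hI hI'
    obtain ⟨k₀, hk₀⟩ := mem_orbs2_iff.mp hI
    obtain ⟨k₀', hk₀'⟩ := mem_orbs2_iff.mp hI'
    have hjI : j ∈ I := (Finset.mem_filter.mp hj).1
    have hj'I' : j' ∈ I' := (Finset.mem_filter.mp hj').1
    have hj'C : j' ∈ C := by rw [← hjC']; exact mem_orb_self j'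
    have hj'I : j' ∈ I := by
      have h1 : j' ∈ orb n σ j := by rw [hjC]; exact hj'C
      have h3 : orb2 n σ π j = I := by
        rw [← hk₀]; exact orb2_eq_of_mem hcσπ (by rw [hk₀]; exact hjI)
      rw [← h3]; exact orb_subset_orb2 j h1
    have hOj1 : orb2 n σ π j' = I := by
      rw [← hk₀]
      exact orb2_eq_of_mem hcσπ (by rw [hk₀]; exact hj'I)
    have hOj2 : orb2 n σ π j' = I' := by
      rw [← hk₀']
      exact orb2_eq_of_mem hcσπ (by rw [hk₀']; exact hj'I')
    exact hne (hOj1.symm.trans hOj2)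
  have hMN : (∑ C ∈ (Finset.univ.filter (fun k => v k = 1)).image (orb n σ), (C.card - 1))
      = ∑ I ∈ orbs2 n σ π, ((orb n σ (rep I)).card - 1)
          * ((I.filter (fun j => v j = 1)).image (fun j => orb n σ j)).card := by
    rw [hpart, Finset.sum_biUnion hdisj]
    apply Finset.sum_congr rfl
    intro I hI
    have hconst : ∀ C ∈ (I.filter (fun j => v j = 1)).image (fun j => orb n σ j),
        C.card - 1 = (orb n σ (rep I)).card - 1 := by
      intro C hC
      obtain ⟨j, hj, hjC⟩ := Finset.mem_image.mp hC
      rw [← hjC, part1 I hI j (Finset.mem_filter.mp hj).1]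
    rw [Finset.sum_congr rfl hconst, Finset.sum_const, smul_eq_mul, mul_comm]
  rw [commutator_formula mt lt σ π v hm hl hσπ hvσ, epsG_pow, key_parity σ v hv, hMN]
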